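/- Let Ψ ∈ ℂ^{N×n} satisfy ‖Ψw‖₂ ≤ β‖w‖₂ for all w ∈ ℂ^n and have DFT-incoherence parameter γ, let the deviation model hold with parameter θ ≥ 0, let A = (√N/√m) S Ψ ∈ ℂ^{m×n}, and let v ∈ ℂ^n have at most s nonzero entries. Then E[ Σ_{k=1}^{m} |(Av)_k|⁴ ] ≤ s β² γ² (1 + 2θ) ‖v‖₂⁴ / m, where the expectation is over the random deviations Δ₁,…,Δ_m. -/

import Mathlib

open scoped BigOperators
open MeasureTheory Matrix

noncomputable section

/-- The complex exponential `e(x) = exp(2πix)`. -/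
def ce (x : ℝ) : ℂ := Complex.exp (2 * Real.pi * Complex.I * x)

/-- Half-bandwidth `Ñ = (N-1)/2`. -/
def Nt (N : ℕ) : ℤ := ((N : ℤ) - 1) / 2

/-- Uniform grid point `t_p = (p-1)/N - 1/2` (zero-based index). -/
def tg (N : ℕ) (p : Fin N) : ℝ := (p : ℝ) / N - 1 / 2

/-- Dirichlet interpolation matrix `S ∈ ℂ^{m×N}`. -/
def dirS (N m : ℕ) (tt : Fin m → ℝ) : Matrix (Fin m) (Fin N) ℂ :=
  fun k p => (N : ℂ)⁻¹ * ∑ u ∈ Finset.Icc (-(Nt N)) (Nt N), ce (u * (tg N p - tt k))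

/-- Centered DFT matrix `F ∈ ℂ^{N×N}`. -/
def dftF (N : ℕ) : Matrix (Fin N) (Fin N) ℂ :=
  fun p u => ((Real.sqrt N : ℂ))⁻¹ * ce (-(tg N p) * ((u : ℤ) - Nt N))

/-- DFT-incoherence parameter of `Ψ`. -/
def dftIncoh (N n : ℕ) (Ψ : Matrix (Fin N) (Fin n) ℂ) : ℝ :=
  ⨆ ℓ : Fin n, ∑ k : Fin N, ‖((dftF N)ᴴ * Ψ) k ℓ‖

/-- Euclidean norm on `ℂ^n`. -/
def norm2 {n : ℕ} (v : Fin n → ℂ) : ℝ := Real.sqrt (∑ i, ‖v i‖ ^ 2)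

/-- `ℓ₁` norm on `ℂ^n`. -/
def norm1 {n : ℕ} (v : Fin n → ℂ) : ℝ := ∑ i, ‖v i‖

/-- `v` has at most `s` nonzero entries. -/
def Sparse {n : ℕ} (s : ℕ) (v : Fin n → ℂ) : Prop :=
  (Finset.univ.filter fun i => v i ≠ 0).card ≤ s

/-- Error of the best `s`-sparse approximation of `g` in `ℓ₁`. -/
def sperr {n : ℕ} (s : ℕ) (g : Fin n → ℂ) : ℝ :=
  sInf {r : ℝ | ∃ h : Fin n → ℂ, Sparse s h ∧ r = norm1 (fun i => h i - g i)}

/-- The 1-periodic signal with Fourier coefficients `c`. -/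
def fcont (c : ℤ → ℂ) (x : ℝ) : ℂ := ∑' ℓ : ℤ, c ℓ * ce (ℓ * x)

/-- Tail `∑_{|ℓ|>Ñ} |c_ℓ|` of the Fourier coefficients. -/
def tailSum (N : ℕ) (c : ℤ → ℂ) : ℝ :=
  ∑' ℓ : ℤ, if Nt N < |ℓ| then ‖c ℓ‖ else 0

/-- The distribution `𝒟` satisfies the deviation model with parameter `θ`. -/
def DevModel (N m : ℕ) (𝒟 : Measure ℝ) (θ : ℝ) : Prop :=
  ∀ j : ℤ, j ≠ 0 → (|j| : ℝ) ≤ 2 * ((N : ℝ) - 1) / m →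
    (2 * N / m) * ‖∫ x, ce (((j * m : ℤ) : ℝ) * x) ∂𝒟‖ ≤ θ

/-- The random nonuniform sample points `t̃_k = (k-1)/m - 1/2 + Δ_k`. -/
def samplePts {Ω : Type*} (m : ℕ) (Δ : Fin m → Ω → ℝ) (ω : Ω) : Fin m → ℝ :=
  fun k => (k : ℝ) / m - 1 / 2 + Δ k ω

end

lemma ce_add (x y : ℝ) : ce (x + y) = ce x * ce y := by
  simp [ce, mul_add, Complex.exp_add]

lemma ce_zero : ce 0 = 1 := by simp [ce]

lemma ce_int (n : ℤ) : ce n = 1 := by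
  simp [ce]
  rw [show 2 * (Real.pi:ℂ) * Complex.I * n = n * (2 * Real.pi * Complex.I) by ring]
  exact Complex.exp_int_mul_two_pi_mul_I n

lemma conj_ce (x : ℝ) : (starRingEnd ℂ) (ce x) = ce (-x) := by
  rw [ce, ce, ← Complex.exp_conj]
  congr 1
  simp only [_root_.map_mul, Complex.conj_I, Complex.conj_ofReal, map_ofNat]
  push_cast
  ring

lemma abs_ce (x : ℝ) : ‖ce x‖ = 1 := by
  rw [ce, Complex.norm_exp]
  simp [mul_comm, Complex.mul_re]

lemma ce_pow (x : ℝ) (k : ℕ) : ce x ^ k = ce (k * x) := by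
  induction k with
  | zero => simp [ce_zero]
  | succ k ih => rw [pow_succ, ih, ← ce_add]; congr 1; push_cast; ring

lemma ce_eq_one_iff (x : ℝ) : ce x = 1 ↔ ∃ n : ℤ, x = n := by
  rw [ce, Complex.exp_eq_one_iff]
  constructor
  · rintro ⟨n, hn⟩
    refine ⟨n, ?_⟩
    have hpi : (2 * Real.pi * Complex.I) ≠ 0 := by
      simp [Real.pi_ne_zero, Complex.I_ne_zero]
    have : (x:ℂ) = n := by
      rw [show 2 * (Real.pi:ℂ) * Complex.I * x = x * (2*Real.pi*Complex.I) by ring] at hn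
      rw [show (n:ℂ) * (2 * ↑Real.pi * Complex.I) = (n:ℂ) * (2*Real.pi*Complex.I) by ring] at hn
      exact mul_right_cancel₀ hpi hn
    exact_mod_cast this
  · rintro ⟨n, hn⟩
    exact ⟨n, by rw [hn]; push_cast; ring⟩

lemma ce_sum_geom (d : ℕ) (hd : 0 < d) (j : ℤ) :
    ∑ k : Fin d, ce (j * k / d) = if (d:ℤ) ∣ j then (d:ℂ) else 0 := by
  have hterm : ∀ k : Fin d, ce (j * k / d) = ce ((j:ℝ)/d) ^ (k:ℕ) := by
    intro k; rw [ce_pow]; congr 1; field_simp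
  rw [Finset.sum_congr rfl (fun k _ => hterm k), Fin.sum_univ_eq_sum_range]
  by_cases h : (d:ℤ) ∣ j
  · obtain ⟨c, rfl⟩ := h
    have h1 : ce ((((d:ℤ)*c : ℤ):ℝ)/d) = 1 := by
      rw [show (((d:ℤ)*c : ℤ):ℝ)/d = ((c:ℤ):ℝ) by push_cast; field_simp]
      exact ce_int c
    push_cast at h1 ⊢
    simp [h1]
  · have hz : ce ((j:ℝ)/d) ≠ 1 := by
      intro hc
      obtain ⟨n, hn⟩ := (ce_eq_one_iff _).1 hc
      apply h
      refine ⟨n, ?_⟩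
      have : (j:ℝ) = d * n := by
        field_simp at hn
        linarith [hn]
      exact_mod_cast this
    rw [geom_sum_eq hz, if_neg h]
    have : ce ((j:ℝ)/d) ^ d = 1 := by
      rw [ce_pow, show (d:ℝ) * ((j:ℝ)/d) = ((j:ℤ):ℝ) by field_simp]
      exact ce_int j
    simp [this]


lemma fin_dvd_diff_eq {d : ℕ} (a b : Fin d) (h : (d:ℤ) ∣ ((a:ℤ) - (b:ℤ))) : a = b := by
  have h1 : |(a:ℤ) - (b:ℤ)| < d := by
    have := a.isLt; have := b.isLt
    rw [abs_lt]; omega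
  have := Int.eq_zero_of_abs_lt_dvd h h1
  have : (a:ℤ) = b := by omega
  exact Fin.ext (by exact_mod_cast this)

lemma dft_ortho (N : ℕ) (hNpos : 0 < N) (p p' : Fin N) :
    ∑ u : Fin N, (starRingEnd ℂ) (dftF N p u) * dftF N p' u = if p = p' then 1 else 0 := by
  have hNr : (0:ℝ) < N := by exact_mod_cast hNpos
  set j : ℤ := (p:ℤ) - (p':ℤ) with hj
  have hterm : ∀ u : Fin N,
      (starRingEnd ℂ) (dftF N p u) * dftF N p' u
        = ((N:ℂ)⁻¹ * ce (-((j:ℝ) * (Nt N)) / N)) * ce ((j:ℝ) * (u:ℕ) / N) := by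
    intro u
    unfold dftF
    rw [_root_.map_mul, map_inv₀, Complex.conj_ofReal, conj_ce]
    have hsqrt : ((Real.sqrt N : ℂ))⁻¹ * ((Real.sqrt N : ℂ))⁻¹ = (N:ℂ)⁻¹ := by
      rw [← mul_inv, ← Complex.ofReal_mul, Real.mul_self_sqrt hNr.le]
      simp [Complex.ofReal_inv]
    rw [show ((Real.sqrt N : ℂ))⁻¹ * ce (-(-(tg N p) * ((u : ℤ) - Nt N))) *
          (((Real.sqrt N : ℂ))⁻¹ * ce (-(tg N p') * ((u : ℤ) - Nt N)))
        = (((Real.sqrt N : ℂ))⁻¹ * ((Real.sqrt N : ℂ))⁻¹) *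
          ce ((-(-(tg N p) * ((u : ℤ) - Nt N))) + (-(tg N p') * ((u : ℤ) - Nt N))) by
      rw [ce_add]; ring]
    rw [hsqrt, mul_assoc, ← ce_add]
    congr 2
    unfold tg
    rw [hj]
    push_cast
    field_simp
    ring
  rw [Finset.sum_congr rfl (fun u _ => hterm u), ← Finset.mul_sum,
    ce_sum_geom N hNpos j]
  by_cases hpp : p = p'
  · have hj0 : j = 0 := by rw [hj, hpp]; ring
    rw [if_pos hpp, hj0]
    norm_num [ce_zero]
    rw [inv_mul_cancel₀ (show ((N:ℂ)) ≠ 0 by exact_mod_cast hNpos.ne')]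
  · have hnd : ¬ ((N:ℤ) ∣ j) := by
      intro hd
      exact hpp (fin_dvd_diff_eq p p' hd)
    simp [hnd, hpp]

lemma parseval (N : ℕ) (hNpos : 0 < N) (g : Fin N → ℂ) :
    ∑ u, ‖(dftF N)ᴴ.mulVec g u‖ ^ 2 = ∑ p, ‖g p‖ ^ 2 := by
  have main : ∑ u, ((dftF N)ᴴ.mulVec g u * (starRingEnd ℂ) ((dftF N)ᴴ.mulVec g u))
      = ∑ p, (g p * (starRingEnd ℂ) (g p)) := by
    have expand : ∀ u : Fin N, (dftF N)ᴴ.mulVec g u * (starRingEnd ℂ) ((dftF N)ᴴ.mulVec g u)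
        = ∑ p, ∑ p', (g p * (starRingEnd ℂ) (g p')) *
            ((starRingEnd ℂ) (dftF N p u) * dftF N p' u) := by
      intro u
      have : (dftF N)ᴴ.mulVec g u = ∑ p, (starRingEnd ℂ) (dftF N p u) * g p := by
        simp [Matrix.mulVec, dotProduct, Matrix.conjTranspose_apply]
      rw [this, _root_.map_sum, Finset.sum_mul_sum]
      refine Finset.sum_congr rfl fun p _ => Finset.sum_congr rfl fun p' _ => ?_
      rw [_root_.map_mul, Complex.conj_conj]
      ring
    rw [Finset.sum_congr rfl fun u _ => expand u]
    rw [Finset.sum_comm]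
    have : ∀ p : Fin N, ∑ u : Fin N, ∑ p', (g p * (starRingEnd ℂ) (g p')) *
            ((starRingEnd ℂ) (dftF N p u) * dftF N p' u) = g p * (starRingEnd ℂ) (g p) := by
      intro p
      rw [Finset.sum_comm]
      have : ∀ p' : Fin N, ∑ u : Fin N, (g p * (starRingEnd ℂ) (g p')) *
              ((starRingEnd ℂ) (dftF N p u) * dftF N p' u)
          = (g p * (starRingEnd ℂ) (g p')) * (if p = p' then 1 else 0) := by
        intro p'
        rw [← Finset.mul_sum, dft_ortho N hNpos p p']
      rw [Finset.sum_congr rfl fun p' _ => this p']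
      simp
    rw [Finset.sum_congr rfl fun p _ => this p]
  have cast1 : ∀ z : ℂ, ‖z‖ ^ 2 = (z * (starRingEnd ℂ) z).re := by
    intro z
    rw [Complex.mul_conj, Complex.ofReal_re, Complex.sq_norm]
  calc ∑ u, ‖(dftF N)ᴴ.mulVec g u‖ ^ 2
      = (∑ u, ((dftF N)ᴴ.mulVec g u * (starRingEnd ℂ) ((dftF N)ᴴ.mulVec g u))).re := by
        rw [Complex.re_sum]; exact Finset.sum_congr rfl fun u _ => cast1 _
    _ = (∑ p, (g p * (starRingEnd ℂ) (g p))).re := by rw [main]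
    _ = ∑ p, ‖g p‖ ^ 2 := by
        rw [Complex.re_sum]; exact Finset.sum_congr rfl fun p _ => (cast1 _).symm

lemma Nt_eq (N : ℕ) (hN : Odd N) : 2 * Nt N + 1 = N := by
  obtain ⟨r, hr⟩ := hN
  subst hr
  unfold Nt
  omega

lemma Nt_nonneg (N : ℕ) (hNpos : 0 < N) : 0 ≤ Nt N := by
  unfold Nt; omega

lemma sum_Icc_eq_sum_fin (N : ℕ) (hN : Odd N) (hNpos : 0 < N) (F : ℤ → ℂ) :
    ∑ j ∈ Finset.Icc (-(Nt N)) (Nt N), F j = ∑ u : Fin N, F ((u:ℤ) - Nt N) := by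
  have h2 := Nt_eq N hN
  have hbnd : ∀ j ∈ Finset.Icc (-(Nt N)) (Nt N), ((j + Nt N).toNat) < N := by
    intro j hj
    rw [Finset.mem_Icc] at hj
    omega
  refine Finset.sum_bij' (i := fun j hj => (⟨(j + Nt N).toNat, hbnd j hj⟩ : Fin N))
    (j := fun u _ => (u:ℤ) - Nt N) (fun a ha => Finset.mem_univ _) ?_ ?_ ?_ ?_
  · intro u _
    beta_reduce
    rw [Finset.mem_Icc]
    have := u.isLt
    omega
  · intro a ha
    rw [Finset.mem_Icc] at ha
    dsimp only
    omega
  · intro u hu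
    apply Fin.ext
    have := u.isLt
    dsimp only
    omega
  · intro a ha
    rw [Finset.mem_Icc] at ha
    congr 1
    dsimp only
    omega


lemma dirS_mulVec (N m : ℕ) (hN : Odd N) (hNpos : 0 < N) (tt : Fin m → ℝ)
    (g : Fin N → ℂ) (k : Fin m) :
    (dirS N m tt).mulVec g k
      = ((Real.sqrt N : ℂ))⁻¹ *
          ∑ u : Fin N, ce (-(((((u:ℤ) - Nt N : ℤ)):ℝ) * tt k)) * ((dftF N)ᴴ.mulVec g u) := by
  have hNr : (0:ℝ) < N := by exact_mod_cast hNpos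
  have hsqrt : ((Real.sqrt N : ℂ))⁻¹ * ((Real.sqrt N : ℂ))⁻¹ = (N:ℂ)⁻¹ := by
    rw [← mul_inv, ← Complex.ofReal_mul, Real.mul_self_sqrt hNr.le]
    simp [Complex.ofReal_inv]
  have lhs_eq : (dirS N m tt).mulVec g k
      = ∑ j ∈ Finset.Icc (-(Nt N)) (Nt N),
          (N:ℂ)⁻¹ * (ce (-((j:ℝ) * tt k)) * ∑ p, ce ((j:ℝ) * tg N p) * g p) := by
    unfold dirS Matrix.mulVec dotProduct
    have step : ∀ p : Fin N,
        ((N : ℂ)⁻¹ * ∑ j ∈ Finset.Icc (-(Nt N)) (Nt N), ce (j * (tg N p - tt k))) * g p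
          = ∑ j ∈ Finset.Icc (-(Nt N)) (Nt N),
              (N:ℂ)⁻¹ * (ce (-((j:ℝ) * tt k)) * (ce ((j:ℝ) * tg N p) * g p)) := by
      intro p
      rw [Finset.mul_sum, Finset.sum_mul]
      refine Finset.sum_congr rfl fun j _ => ?_
      rw [show (j:ℝ) * (tg N p - tt k) = (j:ℝ) * tg N p + -((j:ℝ) * tt k) by ring, ce_add]
      ring
    rw [Finset.sum_congr rfl fun p _ => step p, Finset.sum_comm]
    refine Finset.sum_congr rfl fun j _ => ?_
    rw [← Finset.mul_sum, ← Finset.mul_sum]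
  have rhs_eq : ((Real.sqrt N : ℂ))⁻¹ *
          ∑ u : Fin N, ce (-(((((u:ℤ) - Nt N : ℤ)):ℝ) * tt k)) * ((dftF N)ᴴ.mulVec g u)
      = ∑ u : Fin N,
          (N:ℂ)⁻¹ * (ce (-(((((u:ℤ) - Nt N : ℤ)):ℝ) * tt k)) *
            ∑ p, ce (((((u:ℤ) - Nt N : ℤ)):ℝ) * tg N p) * g p) := by
    rw [Finset.mul_sum]
    refine Finset.sum_congr rfl fun u _ => ?_
    have hcol : (dftF N)ᴴ.mulVec g u
        = ((Real.sqrt N : ℂ))⁻¹ * ∑ p, ce (((((u:ℤ) - Nt N : ℤ)):ℝ) * tg N p) * g p := by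
      unfold Matrix.mulVec dotProduct
      rw [Finset.mul_sum]
      refine Finset.sum_congr rfl fun p _ => ?_
      beta_reduce
      rw [Matrix.conjTranspose_apply]
      unfold dftF
      rw [Complex.star_def, _root_.map_mul, map_inv₀, Complex.conj_ofReal, conj_ce]
      rw [show -(-(tg N p) * (((u:ℕ):ℤ) - Nt N) : ℝ)
            = (((((u:ℤ) - Nt N : ℤ)):ℝ) * tg N p) by push_cast; ring]
      ring
    rw [hcol, ← hsqrt]
    ring
  rw [lhs_eq, rhs_eq]
  rw [sum_Icc_eq_sum_fin N hN hNpos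
    (fun j => (N:ℂ)⁻¹ * (ce (-((j:ℝ) * tt k)) * ∑ p, ce ((j:ℝ) * tg N p) * g p))]

lemma card_dvd_bound (N mm : ℕ) (hm : 0 < mm) (u : Fin N) :
    ((Finset.univ.erase u).filter
        (fun u' : Fin N => (mm:ℤ) ∣ ((u':ℤ) - (u:ℤ)))).card ≤ 2 * ((N - 1) / mm) := by
  obtain ⟨q, hq⟩ : ∃ q : ℕ, q = (N - 1) / mm := ⟨_, rfl⟩
  rw [← hq]
  have key : ∀ u' ∈ (Finset.univ.erase u).filter
      (fun u' : Fin N => (mm:ℤ) ∣ ((u':ℤ) - (u:ℤ))),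
      ((u':ℤ) - (u:ℤ)) / mm ∈ (Finset.Icc (-(q:ℤ)) (q:ℤ)).erase 0 := by
    intro u' hu'
    rw [Finset.mem_filter, Finset.mem_erase] at hu'
    obtain ⟨⟨hne, -⟩, c, hc⟩ := hu'
    have hc' : ((u':ℤ) - (u:ℤ)) / mm = c := by
      rw [hc, Int.mul_ediv_cancel_left _ (by exact_mod_cast hm.ne')]
    have hub : |((u':ℤ) - (u:ℤ))| ≤ (N:ℤ) - 1 := by
      have := u.isLt; have := u'.isLt
      rw [abs_le]; omega
    have hc0 : c ≠ 0 := by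
      intro h0
      apply hne
      apply Fin.ext
      have : (u':ℤ) = (u:ℤ) := by rw [h0] at hc; omega
      exact_mod_cast this
    have hcb : |c| ≤ (q:ℤ) := by
      have h1 : |c| * mm ≤ (N:ℤ) - 1 := by
        calc |c| * mm = |((u':ℤ) - (u:ℤ))| := by rw [hc, abs_mul]; simp [abs_of_nonneg]; ring
          _ ≤ (N:ℤ) - 1 := hub
      have h2 : |c| ≤ ((N:ℤ) - 1) / mm := by
        rw [Int.le_ediv_iff_mul_le (by exact_mod_cast hm)]
        exact h1
      have h3 : ((N:ℤ) - 1) / mm = (q:ℤ) := by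
        rw [hq]
        have hN1 : (0:ℤ) < N ∨ N = 0 := by omega
        rcases hN1 with hN1 | hN1
        · rw [show (N:ℤ) - 1 = ((N - 1 : ℕ) : ℤ) by omega]
          rw [Int.natCast_ediv]
        · exfalso
          have := u.isLt; omega
      rw [← h3]; exact h2
    rw [Finset.mem_erase, Finset.mem_Icc, hc']
    constructor
    · exact hc0
    · rw [abs_le] at hcb; exact hcb
  have inj : Set.InjOn (fun u' : Fin N => ((u':ℤ) - (u:ℤ)) / mm)
      ((Finset.univ.erase u).filter (fun u' : Fin N => (mm:ℤ) ∣ ((u':ℤ) - (u:ℤ)))) := by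
    intro a ha b hb hab
    rw [Finset.coe_filter, Set.mem_setOf_eq] at ha hb
    obtain ⟨-, c1, hc1⟩ := ha
    obtain ⟨-, c2, hc2⟩ := hb
    have hm' : (mm:ℤ) ≠ 0 := by exact_mod_cast hm.ne'
    have e1 : ((a:ℤ) - (u:ℤ)) / mm = c1 := by rw [hc1, Int.mul_ediv_cancel_left _ hm']
    have e2 : ((b:ℤ) - (u:ℤ)) / mm = c2 := by rw [hc2, Int.mul_ediv_cancel_left _ hm']
    simp only at hab
    rw [e1, e2] at hab
    subst hab
    have : (a:ℤ) - (u:ℤ) = (b:ℤ) - (u:ℤ) := hc1.trans hc2.symm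
    have : (a:ℤ) = (b:ℤ) := by omega
    exact Fin.ext (by exact_mod_cast this)
  have hcard := Finset.card_le_card_of_injOn _ key inj
  calc ((Finset.univ.erase u).filter
        (fun u' : Fin N => (mm:ℤ) ∣ ((u':ℤ) - (u:ℤ)))).card
      ≤ ((Finset.Icc (-(q:ℤ)) (q:ℤ)).erase 0).card := hcard
    _ ≤ 2 * q := by
        rw [Finset.card_erase_of_mem (by rw [Finset.mem_Icc]; omega), Int.card_Icc]
        omega


lemma sum_ite_card {N : ℕ} (p : Fin N → Prop) [DecidablePred p] (c : ℝ) :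
    ∑ u' : Fin N, (if p u' then c else 0) = ((Finset.univ.filter p).card : ℝ) * c := by
  rw [← Finset.sum_filter, Finset.sum_const, nsmul_eq_mul]

lemma offdiag_sum_bound (N mm : ℕ) (hm : 0 < mm) (a : Fin N → ℝ) (ha : ∀ u, 0 ≤ a u) :
    ∑ u : Fin N, ∑ u' : Fin N,
        (if u' ≠ u ∧ (mm:ℤ) ∣ ((u':ℤ) - (u:ℤ)) then a u * a u' else 0)
      ≤ (2 * (((N:ℝ) - 1) / mm)) * ∑ u, a u ^ 2 := by
  rcases Nat.eq_zero_or_pos N with hN0 | hNpos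
  · subst hN0; simp
  have hmr : (0:ℝ) < mm := by exact_mod_cast hm
  have cbound : ∀ u : Fin N, ((Finset.univ.filter
      (fun u' : Fin N => u' ≠ u ∧ (mm:ℤ) ∣ ((u':ℤ) - (u:ℤ)))).card : ℝ)
        ≤ 2 * (((N:ℝ) - 1) / mm) := by
    intro u
    have hset : Finset.univ.filter (fun u' : Fin N => u' ≠ u ∧ (mm:ℤ) ∣ ((u':ℤ) - (u:ℤ)))
        = (Finset.univ.erase u).filter (fun u' : Fin N => (mm:ℤ) ∣ ((u':ℤ) - (u:ℤ))) := by
      ext u'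
      simp [Finset.mem_erase, Finset.mem_filter, and_comm, and_assoc]
    rw [hset]
    have h1 := card_dvd_bound N mm hm u
    have h3 : (((N - 1) / mm : ℕ) : ℝ) ≤ ((N:ℝ) - 1) / mm := by
      rw [le_div_iff₀ hmr]
      calc (((N - 1) / mm : ℕ) : ℝ) * mm = (((N - 1) / mm * mm : ℕ) : ℝ) := by push_cast; ring
        _ ≤ ((N - 1 : ℕ) : ℝ) := by exact_mod_cast Nat.div_mul_le_self (N-1) mm
        _ = (N:ℝ) - 1 := by rw [Nat.cast_sub hNpos]; norm_num
    calc (((Finset.univ.erase u).filter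
          (fun u' : Fin N => (mm:ℤ) ∣ ((u':ℤ) - (u:ℤ)))).card : ℝ)
        ≤ ((2 * ((N - 1) / mm) : ℕ) : ℝ) := by exact_mod_cast h1
      _ = 2 * (((N - 1) / mm : ℕ) : ℝ) := by push_cast; ring
      _ ≤ 2 * (((N:ℝ) - 1) / mm) := by linarith
  have amgm : ∀ u u' : Fin N,
      (if u' ≠ u ∧ (mm:ℤ) ∣ ((u':ℤ) - (u:ℤ)) then a u * a u' else 0)
        ≤ (if u' ≠ u ∧ (mm:ℤ) ∣ ((u':ℤ) - (u:ℤ)) then a u ^ 2 / 2 else 0)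
          + (if u' ≠ u ∧ (mm:ℤ) ∣ ((u':ℤ) - (u:ℤ)) then a u' ^ 2 / 2 else 0) := by
    intro u u'
    by_cases hd : u' ≠ u ∧ (mm:ℤ) ∣ ((u':ℤ) - (u:ℤ))
    · simp only [if_pos hd]
      nlinarith [sq_nonneg (a u - a u'), ha u, ha u']
    · simp [hd]
  have step1 : ∑ u : Fin N, ∑ u' : Fin N,
        (if u' ≠ u ∧ (mm:ℤ) ∣ ((u':ℤ) - (u:ℤ)) then a u * a u' else 0)
      ≤ (∑ u : Fin N, ∑ u' : Fin N,
          (if u' ≠ u ∧ (mm:ℤ) ∣ ((u':ℤ) - (u:ℤ)) then a u ^ 2 / 2 else 0))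
        + (∑ u : Fin N, ∑ u' : Fin N,
          (if u' ≠ u ∧ (mm:ℤ) ∣ ((u':ℤ) - (u:ℤ)) then a u' ^ 2 / 2 else 0)) := by
    rw [← Finset.sum_add_distrib]
    refine Finset.sum_le_sum fun u _ => ?_
    rw [← Finset.sum_add_distrib]
    exact Finset.sum_le_sum fun u' _ => amgm u u'
  have halfA : ∑ u : Fin N, ∑ u' : Fin N,
        (if u' ≠ u ∧ (mm:ℤ) ∣ ((u':ℤ) - (u:ℤ)) then a u ^ 2 / 2 else 0)
      ≤ (2 * (((N:ℝ) - 1) / mm)) * (∑ u, a u ^ 2) / 2 := by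
    have : ∀ u : Fin N, ∑ u' : Fin N,
        (if u' ≠ u ∧ (mm:ℤ) ∣ ((u':ℤ) - (u:ℤ)) then a u ^ 2 / 2 else 0)
          ≤ (2 * (((N:ℝ) - 1) / mm)) * (a u ^ 2 / 2) := by
      intro u
      rw [sum_ite_card]
      apply mul_le_mul_of_nonneg_right (cbound u) (by positivity)
    calc ∑ u : Fin N, ∑ u' : Fin N,
          (if u' ≠ u ∧ (mm:ℤ) ∣ ((u':ℤ) - (u:ℤ)) then a u ^ 2 / 2 else 0)
        ≤ ∑ u : Fin N, (2 * (((N:ℝ) - 1) / mm)) * (a u ^ 2 / 2) :=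
          Finset.sum_le_sum fun u _ => this u
      _ = (2 * (((N:ℝ) - 1) / mm)) * (∑ u, a u ^ 2) / 2 := by
          rw [eq_div_iff (by norm_num : (2:ℝ) ≠ 0), Finset.mul_sum, Finset.sum_mul]
          exact Finset.sum_congr rfl fun u _ => by ring
  have halfB : ∑ u : Fin N, ∑ u' : Fin N,
        (if u' ≠ u ∧ (mm:ℤ) ∣ ((u':ℤ) - (u:ℤ)) then a u' ^ 2 / 2 else 0)
      ≤ (2 * (((N:ℝ) - 1) / mm)) * (∑ u, a u ^ 2) / 2 := by
    rw [Finset.sum_comm]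
    have hcongr : ∀ u' u : Fin N,
        (if u' ≠ u ∧ (mm:ℤ) ∣ ((u':ℤ) - (u:ℤ)) then a u' ^ 2 / 2 else 0)
          = (if u ≠ u' ∧ (mm:ℤ) ∣ ((u:ℤ) - (u':ℤ)) then a u' ^ 2 / 2 else 0) := by
      intro u' u
      congr 1
      simp only [eq_iff_iff]
      constructor
      · rintro ⟨h1, h2⟩; exact ⟨h1.symm, (dvd_sub_comm).mp h2⟩
      · rintro ⟨h1, h2⟩; exact ⟨h1.symm, (dvd_sub_comm).mp h2⟩
    have : ∀ u' : Fin N, ∑ u : Fin N,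
        (if u' ≠ u ∧ (mm:ℤ) ∣ ((u':ℤ) - (u:ℤ)) then a u' ^ 2 / 2 else 0)
          ≤ (2 * (((N:ℝ) - 1) / mm)) * (a u' ^ 2 / 2) := by
      intro u'
      rw [Finset.sum_congr rfl fun u _ => hcongr u' u, sum_ite_card]
      apply mul_le_mul_of_nonneg_right (cbound u') (by positivity)
    calc ∑ u' : Fin N, ∑ u : Fin N,
          (if u' ≠ u ∧ (mm:ℤ) ∣ ((u':ℤ) - (u:ℤ)) then a u' ^ 2 / 2 else 0)
        ≤ ∑ u' : Fin N, (2 * (((N:ℝ) - 1) / mm)) * (a u' ^ 2 / 2) :=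
          Finset.sum_le_sum fun u' _ => this u'
      _ = (2 * (((N:ℝ) - 1) / mm)) * (∑ u, a u ^ 2) / 2 := by
          rw [eq_div_iff (by norm_num : (2:ℝ) ≠ 0), Finset.mul_sum, Finset.sum_mul]
          exact Finset.sum_congr rfl fun u _ => by ring
  linarith

noncomputable def phiD (𝒟 : Measure ℝ) (j : ℤ) : ℂ := ∫ x, ce ((j:ℝ) * x) ∂𝒟

lemma measurable_ce {α : Type*} [MeasurableSpace α] {f : α → ℝ} (hf : Measurable f) :
    Measurable fun a => ce (f a) := by
  have hc : Continuous fun x : ℝ => ce x := by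
    unfold ce
    exact Complex.continuous_exp.comp (continuous_const.mul Complex.continuous_ofReal)
  exact hc.measurable.comp hf

lemma core_sq_bound (N m : ℕ) (hNpos : 0 < N) (hm : 0 < m)
    (Ωs : Type) (mΩ : MeasurableSpace Ωs) (μ : Measure Ωs) (hμ : IsProbabilityMeasure μ)
    (Δ : Fin m → Ωs → ℝ) (hmeas : ∀ k, Measurable (Δ k))
    (𝒟 : Measure ℝ) (h𝒟 : IsProbabilityMeasure 𝒟)
    (hdist : ∀ k, Measure.map (Δ k) μ = 𝒟)
    (θ : ℝ) (hθ : 0 ≤ θ) (hdev : DevModel N m 𝒟 θ)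
    (h : Fin N → ℂ) :
    ∑ k : Fin m, (∫ ω, ‖∑ u : Fin N,
        ce (-(((((u:ℤ) - Nt N : ℤ)):ℝ) * samplePts m Δ ω k)) * h u‖ ^ 2 ∂μ)
      ≤ (1 + 2*θ) * m * ∑ u, ‖h u‖ ^ 2 := by
  haveI := hμ
  haveI := h𝒟
  have hNr : (0:ℝ) < N := by exact_mod_cast hNpos
  have hmr : (0:ℝ) < m := by exact_mod_cast hm
  set S : ℝ := ∑ u, ‖h u‖ ^ 2 with hS
  have hS0 : 0 ≤ S := Finset.sum_nonneg fun u _ => by positivity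
  -- measurability and integrability of the elementary exponentials
  have hmce : ∀ (r : ℝ) (k : Fin m), Measurable fun ω => ce (r * samplePts m Δ ω k) := by
    intro r k
    apply measurable_ce
    unfold samplePts
    exact ((hmeas k).const_add _).const_mul r
  have hice : ∀ (r : ℝ) (k : Fin m), Integrable (fun ω => ce (r * samplePts m Δ ω k)) μ := by
    intro r k
    refine Integrable.mono' (integrable_const 1) ((hmce r k).aestronglyMeasurable) ?_
    filter_upwards with ω
    rw [abs_ce]
  -- the elementary integral
  have hint1 : ∀ (k : Fin m) (j : ℤ),
      ∫ ω, ce ((j:ℝ) * samplePts m Δ ω k) ∂μ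
        = ce ((j:ℝ) * ((k:ℝ)/m - 1/2)) * phiD 𝒟 j := by
    intro k j
    have e1 : ∀ ω, ce ((j:ℝ) * samplePts m Δ ω k)
        = ce ((j:ℝ) * ((k:ℝ)/m - 1/2)) * ce ((j:ℝ) * Δ k ω) := by
      intro ω
      rw [← ce_add]
      congr 1
      unfold samplePts
      ring
    simp only [e1]
    rw [integral_const_mul]
    congr 1
    unfold phiD
    rw [← hdist k]
    have hsm : AEStronglyMeasurable (fun x : ℝ => ce ((j:ℝ) * x)) (Measure.map (Δ k) μ) :=
      (measurable_ce (measurable_id.const_mul ((j:ℤ):ℝ))).aestronglyMeasurable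
    rw [integral_map (hmeas k).aemeasurable hsm]
  have hphi0 : phiD 𝒟 0 = 1 := by
    unfold phiD
    simp [ce_zero]
  have hphib : ∀ j : ℤ, j ≠ 0 → |j| ≤ (N:ℤ) - 1 → (m:ℤ) ∣ j →
      ‖phiD 𝒟 j‖ ≤ θ * m / (2 * N) := by
    rintro j hj0 hjb ⟨j', rfl⟩
    have hj'0 : j' ≠ 0 := by rintro rfl; simp at hj0
    have habs : |j'| * m ≤ (N:ℤ) - 1 := by
      have h1 : |(m:ℤ) * j'| = |j'| * m := by
        rw [abs_mul, abs_of_nonneg (by positivity : (0:ℤ) ≤ (m:ℤ))]; ring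
      omega
    have hbr : (|j'| : ℝ) ≤ 2 * ((N:ℝ) - 1) / m := by
      have h1 : (|j'| : ℝ) * m ≤ (N:ℝ) - 1 := by exact_mod_cast habs
      have h2 : (0:ℝ) ≤ (|j'|:ℝ) * m := by positivity
      rw [le_div_iff₀ hmr]
      nlinarith [abs_nonneg j']
    have hd := hdev j' hj'0 hbr
    have heq : phiD 𝒟 ((m:ℤ) * j') = ∫ x, ce ((((j' * m : ℤ)):ℝ) * x) ∂𝒟 := by
      unfold phiD
      rw [show ((m:ℤ) * j') = (j' * (m:ℤ)) from mul_comm _ _]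
    rw [heq]
    set X := ‖∫ x, ce ((((j' * m : ℤ)):ℝ) * x) ∂𝒟‖ with hX
    rw [le_div_iff₀ (by positivity : (0:ℝ) < 2 * N)]
    have hstep := mul_le_mul_of_nonneg_right hd hmr.le
    calc X * (2*N) = (2 * N / m * X) * m := by field_simp
      _ ≤ θ * m := hstep
  -- geometric sum over k
  have hksum : ∀ j : ℤ, (∑ k : Fin m, ce ((j:ℝ) * ((k:ℝ)/m - 1/2)))
      = (if (m:ℤ) ∣ j then (m:ℂ) else 0) * ce (-(j:ℝ)/2) := by
    intro j
    have e : ∀ k : Fin m, ce ((j:ℝ) * ((k:ℝ)/m - 1/2))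
        = ce ((j:ℝ) * (k:ℕ) / m) * ce (-(j:ℝ)/2) := by
      intro k
      rw [← ce_add]
      congr 1
      ring
    rw [Finset.sum_congr rfl fun k _ => e k, ← Finset.sum_mul, ce_sum_geom m hm j]
  -- expansion of the square
  have hexp : ∀ (k : Fin m) (ω : Ωs),
      ‖∑ u : Fin N,
          ce (-(((((u:ℤ) - Nt N : ℤ)):ℝ) * samplePts m Δ ω k)) * h u‖ ^ 2
        = (∑ u : Fin N, ∑ u' : Fin N,
            ce ((((u':ℤ) - (u:ℤ) : ℤ):ℝ) * samplePts m Δ ω k)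
              * (h u * (starRingEnd ℂ) (h u'))).re := by
    intro k ω
    rw [Complex.sq_norm]
    rw [show Complex.normSq (∑ u : Fin N,
          ce (-(((((u:ℤ) - Nt N : ℤ)):ℝ) * samplePts m Δ ω k)) * h u)
        = ((∑ u : Fin N, ce (-(((((u:ℤ) - Nt N : ℤ)):ℝ) * samplePts m Δ ω k)) * h u)
            * (starRingEnd ℂ) (∑ u : Fin N,
              ce (-(((((u:ℤ) - Nt N : ℤ)):ℝ) * samplePts m Δ ω k)) * h u)).re by
      rw [Complex.mul_conj, Complex.ofReal_re]]
    congr 1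
    rw [map_sum, Finset.sum_mul_sum]
    refine Finset.sum_congr rfl fun u _ => Finset.sum_congr rfl fun u' _ => ?_
    rw [_root_.map_mul, conj_ce]
    have hce : ce (-(((((u:ℤ) - Nt N : ℤ)):ℝ) * samplePts m Δ ω k))
        * ce (-(-(((((u':ℤ) - Nt N : ℤ)):ℝ) * samplePts m Δ ω k)))
        = ce ((((u':ℤ) - (u:ℤ) : ℤ):ℝ) * samplePts m Δ ω k) := by
      rw [← ce_add]
      congr 1
      push_cast
      ring
    linear_combination (h u * (starRingEnd ℂ) (h u')) * hce
  -- the integral for a fixed k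
  have hintk : ∀ k : Fin m,
      (∫ ω, ‖∑ u : Fin N,
          ce (-(((((u:ℤ) - Nt N : ℤ)):ℝ) * samplePts m Δ ω k)) * h u‖ ^ 2 ∂μ)
        = (∑ u : Fin N, ∑ u' : Fin N,
            (ce ((((u':ℤ) - (u:ℤ) : ℤ):ℝ) * ((k:ℝ)/m - 1/2)) * phiD 𝒟 ((u':ℤ) - (u:ℤ)))
              * (h u * (starRingEnd ℂ) (h u'))).re := by
    intro k
    rw [integral_congr_ae (Filter.Eventually.of_forall (hexp k))]
    have hInt : Integrable (fun ω => ∑ u : Fin N, ∑ u' : Fin N,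
        ce ((((u':ℤ) - (u:ℤ) : ℤ):ℝ) * samplePts m Δ ω k)
          * (h u * (starRingEnd ℂ) (h u'))) μ :=
      integrable_finset_sum _ fun u _ =>
        integrable_finset_sum _ fun u' _ => (hice _ k).mul_const _
    rw [show (∫ ω, (∑ u : Fin N, ∑ u' : Fin N,
        ce ((((u':ℤ) - (u:ℤ) : ℤ):ℝ) * samplePts m Δ ω k)
          * (h u * (starRingEnd ℂ) (h u'))).re ∂μ)
      = (∫ ω, (∑ u : Fin N, ∑ u' : Fin N,
        ce ((((u':ℤ) - (u:ℤ) : ℤ):ℝ) * samplePts m Δ ω k)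
          * (h u * (starRingEnd ℂ) (h u'))) ∂μ).re from integral_re hInt]
    congr 1
    rw [integral_finset_sum _ (fun u _ =>
      integrable_finset_sum _ fun u' _ => (hice _ k).mul_const _)]
    refine Finset.sum_congr rfl fun u _ => ?_
    rw [integral_finset_sum _ (fun u' _ => (hice _ k).mul_const _)]
    refine Finset.sum_congr rfl fun u' _ => ?_
    rw [integral_mul_const, hint1 k _]
  -- swap the sums
  have hswap : ∑ k : Fin m, (∫ ω, ‖∑ u : Fin N,
        ce (-(((((u:ℤ) - Nt N : ℤ)):ℝ) * samplePts m Δ ω k)) * h u‖ ^ 2 ∂μ)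
      = (∑ u : Fin N, ∑ u' : Fin N,
          ((if (m:ℤ) ∣ ((u':ℤ) - (u:ℤ)) then (m:ℂ) else 0)
            * ce (-((((u':ℤ) - (u:ℤ) : ℤ):ℝ))/2))
            * (phiD 𝒟 ((u':ℤ) - (u:ℤ)) * (h u * (starRingEnd ℂ) (h u')))).re := by
    rw [Finset.sum_congr rfl fun k _ => hintk k, ← Complex.re_sum]
    congr 1
    rw [Finset.sum_comm]
    refine Finset.sum_congr rfl fun u _ => ?_
    rw [Finset.sum_comm]
    refine Finset.sum_congr rfl fun u' _ => ?_
    have e : ∀ k : Fin m,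
        (ce ((((u':ℤ) - (u:ℤ) : ℤ):ℝ) * ((k:ℝ)/m - 1/2)) * phiD 𝒟 ((u':ℤ) - (u:ℤ)))
          * (h u * (starRingEnd ℂ) (h u'))
        = ce ((((u':ℤ) - (u:ℤ) : ℤ):ℝ) * ((k:ℝ)/m - 1/2))
            * (phiD 𝒟 ((u':ℤ) - (u:ℤ)) * (h u * (starRingEnd ℂ) (h u'))) := by
      intro k; ring
    rw [Finset.sum_congr rfl fun k _ => e k, ← Finset.sum_mul, hksum _]
  rw [hswap]
  -- split into diagonal and off-diagonal
  set G : Fin N → Fin N → ℂ := fun u u' =>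
    ((if (m:ℤ) ∣ ((u':ℤ) - (u:ℤ)) then (m:ℂ) else 0)
      * ce (-((((u':ℤ) - (u:ℤ) : ℤ):ℝ))/2))
      * (phiD 𝒟 ((u':ℤ) - (u:ℤ)) * (h u * (starRingEnd ℂ) (h u'))) with hG
  have hGdiag : ∀ u : Fin N, G u u = (m:ℂ) * ((‖h u‖ ^ 2 : ℝ) : ℂ) := by
    intro u
    rw [hG]
    simp only [sub_self, Int.cast_zero, neg_zero, zero_div, ce_zero, dvd_zero, if_true,
      hphi0, Complex.mul_conj, one_mul, mul_one]
    rw [show ((‖h u‖ ^ 2 : ℝ) : ℂ) = ((Complex.normSq (h u) : ℝ) : ℂ) by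
      rw [Complex.sq_norm]]
  have hsplit : ∀ u : Fin N, ∑ u' : Fin N, G u u'
      = G u u + ∑ u' : Fin N, (if u' = u then 0 else G u u') := by
    intro u
    have e : ∀ u' : Fin N, G u u'
        = (if u' = u then G u u' else 0) + (if u' = u then 0 else G u u') := by
      intro u'
      by_cases hc : u' = u <;> simp [hc]
    rw [Finset.sum_congr rfl fun u' _ => e u', Finset.sum_add_distrib]
    congr 1
    rw [Finset.sum_ite_eq' Finset.univ u (fun u' => G u u')]
    simp
  rw [Complex.re_sum, Finset.sum_congr rfl fun u _ => congrArg Complex.re (hsplit u)]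
  simp only [Complex.add_re]
  rw [Finset.sum_add_distrib]
  have hdiagsum : ∑ u : Fin N, (G u u).re = m * S := by
    rw [Finset.sum_congr rfl fun u _ => congrArg Complex.re (hGdiag u)]
    rw [hS, Finset.mul_sum]
    refine Finset.sum_congr rfl fun u _ => ?_
    rw [show ((m:ℂ) * ((‖h u‖ ^ 2 : ℝ) : ℂ)) = (((m * ‖h u‖ ^ 2 : ℝ)) : ℂ) by push_cast; ring]
    rw [Complex.ofReal_re]
  rw [hdiagsum]
  -- bound the off-diagonal part
  have hGbound : ∀ u u' : Fin N,
      ‖if u' = u then 0 else G u u'‖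
        ≤ (if u' ≠ u ∧ (m:ℤ) ∣ ((u':ℤ) - (u:ℤ))
            then (m * (θ * m / (2 * N))) * (‖h u‖ * ‖h u'‖)
            else 0) := by
    intro u u'
    by_cases hne : u' = u
    · simp [hne]
    rw [if_neg hne]
    by_cases hdvd : (m:ℤ) ∣ ((u':ℤ) - (u:ℤ))
    · rw [if_pos ⟨hne, hdvd⟩, hG]
      simp only
      rw [norm_mul, norm_mul, norm_mul, norm_mul]
      rw [if_pos hdvd, abs_ce, Complex.norm_conj]
      have hJ0 : ((u':ℤ) - (u:ℤ)) ≠ 0 := by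
        intro hc
        apply hne
        apply Fin.ext
        have : (u':ℤ) = (u:ℤ) := by omega
        exact_mod_cast this
      have hJb : |(u':ℤ) - (u:ℤ)| ≤ (N:ℤ) - 1 := by
        have := u.isLt; have := u'.isLt
        rw [abs_le]; omega
      have hphi := hphib _ hJ0 hJb hdvd
      have habsm : ‖(m:ℂ)‖ = (m:ℝ) := by
        rw [Complex.norm_natCast]
      rw [habsm]
      calc (m:ℝ) * 1 * (‖phiD 𝒟 ((u':ℤ) - (u:ℤ))‖
              * (‖h u‖ * ‖h u'‖))
          ≤ (m:ℝ) * 1 * ((θ * m / (2 * N)) * (‖h u‖ * ‖h u'‖)) := by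
            apply mul_le_mul_of_nonneg_left _ (by positivity)
            apply mul_le_mul_of_nonneg_right hphi (by positivity)
        _ = (m * (θ * m / (2 * N))) * (‖h u‖ * ‖h u'‖) := by ring
    · rw [if_neg (by tauto), hG]
      simp only
      rw [if_neg hdvd]
      simp
  have hoff : ∑ u : Fin N, (∑ u' : Fin N, (if u' = u then 0 else G u u')).re
      ≤ 2 * θ * m * S := by
    have step1 : ∀ u : Fin N, (∑ u' : Fin N, (if u' = u then 0 else G u u')).re
        ≤ ∑ u' : Fin N, ‖if u' = u then 0 else G u u'‖ :=
      fun u => (Complex.re_le_norm _).trans (norm_sum_le _ _)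
    have step2 : ∑ u : Fin N, (∑ u' : Fin N, (if u' = u then 0 else G u u')).re
        ≤ ∑ u : Fin N, ∑ u' : Fin N,
            (if u' ≠ u ∧ (m:ℤ) ∣ ((u':ℤ) - (u:ℤ))
              then (m * (θ * m / (2 * N))) * (‖h u‖ * ‖h u'‖)
              else 0) := by
      refine Finset.sum_le_sum fun u _ => (step1 u).trans ?_
      exact Finset.sum_le_sum fun u' _ => hGbound u u'
    have step3 : ∑ u : Fin N, ∑ u' : Fin N,
          (if u' ≠ u ∧ (m:ℤ) ∣ ((u':ℤ) - (u:ℤ))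
            then (m * (θ * m / (2 * N))) * (‖h u‖ * ‖h u'‖)
            else 0)
        = (m * (θ * m / (2 * N))) * ∑ u : Fin N, ∑ u' : Fin N,
            (if u' ≠ u ∧ (m:ℤ) ∣ ((u':ℤ) - (u:ℤ))
              then (‖h u‖ * ‖h u'‖)
              else 0) := by
      rw [Finset.mul_sum]
      refine Finset.sum_congr rfl fun u _ => ?_
      rw [Finset.mul_sum]
      refine Finset.sum_congr rfl fun u' _ => ?_
      by_cases hc : u' ≠ u ∧ (m:ℤ) ∣ ((u':ℤ) - (u:ℤ)) <;> simp [hc]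
    have step4 := offdiag_sum_bound N m hm (fun u => ‖h u‖)
      (fun u => norm_nonneg _)
    have hconst : 0 ≤ m * (θ * m / (2 * N)) := by positivity
    have step5 : (m * (θ * m / (2 * N))) * ∑ u : Fin N, ∑ u' : Fin N,
            (if u' ≠ u ∧ (m:ℤ) ∣ ((u':ℤ) - (u:ℤ))
              then (‖h u‖ * ‖h u'‖)
              else 0)
        ≤ (m * (θ * m / (2 * N))) * ((2 * (((N:ℝ) - 1) / m)) * S) :=
      mul_le_mul_of_nonneg_left step4 hconst
    have step6 : (m * (θ * m / (2 * N))) * ((2 * (((N:ℝ) - 1) / m)) * S) ≤ 2 * θ * m * S := by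
      have hkey : (m * (θ * m / (2 * N))) * (2 * (((N:ℝ) - 1) / m)) ≤ 2 * θ * m := by
        have hN1 : (1:ℝ) ≤ N := by exact_mod_cast hNpos
        rw [show (m:ℝ) * (θ * m / (2*N)) * (2 * (((N:ℝ)-1)/m))
            = θ * m * (((N:ℝ)-1)/N) by field_simp]
        have h1 : ((N:ℝ)-1)/N ≤ 1 := by rw [div_le_one hNr]; linarith
        have h2 : (0:ℝ) ≤ ((N:ℝ)-1)/N := by
          apply div_nonneg (by linarith) hNr.le
        nlinarith [mul_nonneg hθ hmr.le]
      calc (m * (θ * m / (2 * N))) * ((2 * (((N:ℝ) - 1) / m)) * S)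
          = ((m * (θ * m / (2 * N))) * (2 * (((N:ℝ) - 1) / m))) * S := by ring
        _ ≤ (2 * θ * m) * S := mul_le_mul_of_nonneg_right hkey hS0
    calc ∑ u : Fin N, (∑ u' : Fin N, (if u' = u then 0 else G u u')).re
        ≤ _ := step2
      _ = _ := step3
      _ ≤ _ := step5
      _ ≤ 2 * θ * m * S := step6
  calc m * S + ∑ u : Fin N, (∑ u' : Fin N, (if u' = u then 0 else G u u')).re
      ≤ m * S + 2 * θ * m * S := by linarith
    _ = (1 + 2*θ) * m * S := by ring



set_option maxHeartbeats 1000000 in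
/-- fourth-moment bound
`E[Σ_k |(Av)_k|⁴] ≤ s β² γ² (1+2θ) ‖v‖₂⁴ / m` for `A = (√N/√m) S Ψ` and `s`-sparse `v`. -/
theorem fourth_moment_bound
    (N n m s : ℕ) (hN : Odd N) (hNpos : 0 < N) (hm : 0 < m) (hn : 0 < n)
    (Ψ : Matrix (Fin N) (Fin n) ℂ) (β : ℝ)
    (hΨ : ∀ w : Fin n → ℂ, norm2 (Ψ.mulVec w) ≤ β * norm2 w)
    (Ωs : Type) (mΩ : MeasurableSpace Ωs) (μ : Measure Ωs) (hμ : IsProbabilityMeasure μ)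
    (Δ : Fin m → Ωs → ℝ) (hmeas : ∀ k, Measurable (Δ k))
    (hindep : ProbabilityTheory.iIndepFun Δ μ)
    (𝒟 : Measure ℝ) (h𝒟 : IsProbabilityMeasure 𝒟)
    (hdist : ∀ k, Measure.map (Δ k) μ = 𝒟)
    (θ : ℝ) (hθ : 0 ≤ θ) (hdev : DevModel N m 𝒟 θ)
    (v : Fin n → ℂ) (hv : Sparse s v) :
    (∫ ω, ∑ k : Fin m, ‖(((Real.sqrt N : ℂ) / (Real.sqrt m : ℂ)) •
        (dirS N m (samplePts m Δ ω) * Ψ)).mulVec v k‖ ^ 4 ∂μ) ≤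
      s * β ^ 2 * dftIncoh N n Ψ ^ 2 * (1 + 2 * θ) * norm2 v ^ 4 / m := by
  haveI := hμ
  have hNr : (0:ℝ) < N := by exact_mod_cast hNpos
  have hmr : (0:ℝ) < m := by exact_mod_cast hm
  have hsN : (0:ℝ) < Real.sqrt N := Real.sqrt_pos.mpr hNr
  have hsm : (0:ℝ) < Real.sqrt m := Real.sqrt_pos.mpr hmr
  set g : Fin N → ℂ := Ψ.mulVec v with hg
  set hvec : Fin N → ℂ := (dftF N)ᴴ.mulVec g with hhvec
  set γ : ℝ := dftIncoh N n Ψ with hγdef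
  set H : ℝ := ∑ u, ‖hvec u‖ with hH
  set S' : ℝ := ∑ u, ‖hvec u‖ ^ 2 with hS'
  have hH0 : 0 ≤ H := Finset.sum_nonneg fun u _ => norm_nonneg _
  have hS'0 : 0 ≤ S' := Finset.sum_nonneg fun u _ => by positivity
  -- identity for the matrix-vector product
  have ident : ∀ (ω : Ωs) (k : Fin m),
      ((((Real.sqrt N : ℂ) / (Real.sqrt m : ℂ)) •
          (dirS N m (samplePts m Δ ω) * Ψ)).mulVec v) k
        = ((Real.sqrt m : ℂ))⁻¹ * ∑ u : Fin N,
            ce (-(((((u:ℤ) - Nt N : ℤ)):ℝ) * samplePts m Δ ω k)) * hvec u := by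
    intro ω k
    rw [Matrix.smul_mulVec, Pi.smul_apply, smul_eq_mul,
      ← Matrix.mulVec_mulVec, dirS_mulVec N m hN hNpos (samplePts m Δ ω) g k]
    rw [← mul_assoc]
    congr 1
    have h1 : ((Real.sqrt N : ℝ) : ℂ) ≠ 0 := by
      simp only [ne_eq, Complex.ofReal_eq_zero]
      exact hsN.ne'
    field_simp
  -- pointwise absolute-value identity and bound
  have habs : ∀ (ω : Ωs) (k : Fin m),
      ‖((((Real.sqrt N : ℂ) / (Real.sqrt m : ℂ)) •
          (dirS N m (samplePts m Δ ω) * Ψ)).mulVec v) k‖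
        = (Real.sqrt m)⁻¹ * ‖∑ u : Fin N,
            ce (-(((((u:ℤ) - Nt N : ℤ)):ℝ) * samplePts m Δ ω k)) * hvec u‖ := by
    intro ω k
    rw [ident ω k, norm_mul, norm_inv, Complex.norm_real, Real.norm_eq_abs,
      abs_of_nonneg (Real.sqrt_nonneg _)]
  have hYb : ∀ (ω : Ωs) (k : Fin m),
      ‖∑ u : Fin N,
          ce (-(((((u:ℤ) - Nt N : ℤ)):ℝ) * samplePts m Δ ω k)) * hvec u‖ ≤ H := by
    intro ω k
    refine (norm_sum_le _ _).trans ?_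
    rw [hH]
    refine Finset.sum_le_sum fun u _ => ?_
    rw [norm_mul, abs_ce, one_mul]
  -- column-sum bound: H ≤ γ * norm1 v
  have hγcol : ∀ ℓ : Fin n, ∑ u : Fin N, ‖((dftF N)ᴴ * Ψ) u ℓ‖ ≤ γ := by
    intro ℓ
    rw [hγdef]
    unfold dftIncoh
    exact le_ciSup (f := fun ℓ : Fin n => ∑ k : Fin N, ‖((dftF N)ᴴ * Ψ) k ℓ‖)
      (Set.Finite.bddAbove (Set.finite_range _)) ℓ
  have hγ0 : 0 ≤ γ := by
    obtain ⟨ℓ⟩ := Fin.pos_iff_nonempty.mp hn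
    exact (Finset.sum_nonneg fun u _ => norm_nonneg _).trans (hγcol ℓ)
  have hHγ : H ≤ γ * norm1 v := by
    rw [hH]
    have h1 : ∀ u : Fin N, ‖hvec u‖
        ≤ ∑ ℓ : Fin n, ‖((dftF N)ᴴ * Ψ) u ℓ‖ * ‖v ℓ‖ := by
      intro u
      rw [hhvec, hg, Matrix.mulVec_mulVec]
      refine (norm_sum_le Finset.univ (fun ℓ => ((dftF N)ᴴ * Ψ) u ℓ * v ℓ)).trans ?_
      refine Finset.sum_le_sum fun ℓ _ => ?_
      rw [norm_mul]
    calc ∑ u, ‖hvec u‖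
        ≤ ∑ u : Fin N, ∑ ℓ : Fin n,
            ‖((dftF N)ᴴ * Ψ) u ℓ‖ * ‖v ℓ‖ :=
          Finset.sum_le_sum fun u _ => h1 u
      _ = ∑ ℓ : Fin n, (∑ u : Fin N, ‖((dftF N)ᴴ * Ψ) u ℓ‖) * ‖v ℓ‖ := by
          rw [Finset.sum_comm]
          exact Finset.sum_congr rfl fun ℓ _ => by rw [Finset.sum_mul]
      _ ≤ ∑ ℓ : Fin n, γ * ‖v ℓ‖ :=
          Finset.sum_le_sum fun ℓ _ =>
            mul_le_mul_of_nonneg_right (hγcol ℓ) (norm_nonneg _)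
      _ = γ * norm1 v := by rw [norm1, ← Finset.mul_sum]
  -- sparsity: norm1 v ^ 2 ≤ s * norm2 v ^ 2
  have hnorm2sq : norm2 v ^ 2 = ∑ i, ‖v i‖ ^ 2 := by
    rw [norm2, Real.sq_sqrt (Finset.sum_nonneg fun i _ => by positivity)]
  have hsparse : norm1 v ^ 2 ≤ s * norm2 v ^ 2 := by
    set T := Finset.univ.filter (fun i : Fin n => v i ≠ 0) with hT
    have e1 : norm1 v = ∑ i ∈ T, ‖v i‖ := by
      rw [norm1, hT]
      refine (Finset.sum_filter_of_ne fun i _ hne => ?_).symm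
      intro hc
      exact hne (by rw [hc, norm_zero])
    have e2 : (∑ i ∈ T, ‖v i‖) ^ 2
        ≤ (∑ i ∈ T, ‖v i‖ ^ 2) * (∑ i ∈ T, (1:ℝ) ^ 2) := by
      have := Finset.sum_mul_sq_le_sq_mul_sq T (fun i => ‖v i‖) (fun _ => 1)
      simpa using this
    have e3 : (∑ i ∈ T, (1:ℝ) ^ 2) = T.card := by simp
    have e4 : (∑ i ∈ T, ‖v i‖ ^ 2) ≤ norm2 v ^ 2 := by
      rw [hnorm2sq]
      exact Finset.sum_le_sum_of_subset_of_nonneg (Finset.filter_subset _ _)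
        (fun i _ _ => by positivity)
    have e5 : (T.card : ℝ) ≤ s := by exact_mod_cast hv
    calc norm1 v ^ 2 = (∑ i ∈ T, ‖v i‖) ^ 2 := by rw [e1]
      _ ≤ (∑ i ∈ T, ‖v i‖ ^ 2) * (∑ i ∈ T, (1:ℝ) ^ 2) := e2
      _ = (∑ i ∈ T, ‖v i‖ ^ 2) * T.card := by rw [e3]
      _ ≤ norm2 v ^ 2 * s := by
          apply mul_le_mul e4 e5 (by positivity) (by positivity)
      _ = s * norm2 v ^ 2 := by ring
  -- Parseval and the operator bound
  have hpars : S' ≤ β ^ 2 * norm2 v ^ 2 := by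
    rw [hS', hhvec, parseval N hNpos g]
    have h1 : ∑ p, ‖g p‖ ^ 2 = norm2 g ^ 2 := by
      rw [norm2, Real.sq_sqrt (Finset.sum_nonneg fun p _ => by positivity)]
    rw [h1]
    calc norm2 g ^ 2 ≤ (β * norm2 v) ^ 2 := by
          apply pow_le_pow_left₀ (Real.sqrt_nonneg _) (hΨ v)
      _ = β ^ 2 * norm2 v ^ 2 := by ring
  -- measurability / integrability of the integrands
  have hYmeas : ∀ k : Fin m, Measurable (fun ω => ∑ u : Fin N,
      ce (-(((((u:ℤ) - Nt N : ℤ)):ℝ) * samplePts m Δ ω k)) * hvec u) := by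
    intro k
    apply Finset.measurable_sum
    intro u _
    apply Measurable.mul_const
    apply measurable_ce
    unfold samplePts
    exact ((((hmeas k).const_add _).const_mul _)).neg
  have hXmeas : ∀ k : Fin m, Measurable (fun ω =>
      (Real.sqrt m)⁻¹ * ‖∑ u : Fin N,
        ce (-(((((u:ℤ) - Nt N : ℤ)):ℝ) * samplePts m Δ ω k)) * hvec u‖) :=
    fun k => (continuous_norm.measurable.comp (hYmeas k)).const_mul _
  have hint4 : ∀ k : Fin m, Integrable (fun ω =>
      ((Real.sqrt m)⁻¹ * ‖∑ u : Fin N,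
        ce (-(((((u:ℤ) - Nt N : ℤ)):ℝ) * samplePts m Δ ω k)) * hvec u‖) ^ 4) μ := by
    intro k
    refine Integrable.mono' (integrable_const (((Real.sqrt m)⁻¹ * H) ^ 4))
      ((hXmeas k).pow_const 4).aestronglyMeasurable ?_
    filter_upwards with ω
    rw [Real.norm_eq_abs, abs_of_nonneg (by positivity)]
    apply pow_le_pow_left₀ (by positivity)
    exact mul_le_mul_of_nonneg_left (hYb ω k) (by positivity)
  have hint2 : ∀ k : Fin m, Integrable (fun ω =>
      ((Real.sqrt m)⁻¹ * ‖∑ u : Fin N,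
        ce (-(((((u:ℤ) - Nt N : ℤ)):ℝ) * samplePts m Δ ω k)) * hvec u‖) ^ 2) μ := by
    intro k
    refine Integrable.mono' (integrable_const (((Real.sqrt m)⁻¹ * H) ^ 2))
      ((hXmeas k).pow_const 2).aestronglyMeasurable ?_
    filter_upwards with ω
    rw [Real.norm_eq_abs, abs_of_nonneg (by positivity)]
    apply pow_le_pow_left₀ (by positivity)
    exact mul_le_mul_of_nonneg_left (hYb ω k) (by positivity)
  -- rewrite the goal integrand
  have hrw : (∫ ω, ∑ k : Fin m, ‖(((Real.sqrt N : ℂ) / (Real.sqrt m : ℂ)) •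
        (dirS N m (samplePts m Δ ω) * Ψ)).mulVec v k‖ ^ 4 ∂μ)
      = ∫ ω, ∑ k : Fin m, ((Real.sqrt m)⁻¹ * ‖∑ u : Fin N,
          ce (-(((((u:ℤ) - Nt N : ℤ)):ℝ) * samplePts m Δ ω k)) * hvec u‖) ^ 4 ∂μ := by
    refine integral_congr_ae (Filter.Eventually.of_forall fun ω => ?_)
    exact Finset.sum_congr rfl fun k _ => by rw [habs ω k]
  rw [hrw]
  -- compare the 4th power with the square
  have hB : ((Real.sqrt m)⁻¹ * H) ^ 2 = H ^ 2 / m := by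
    rw [mul_pow, ← Real.sq_sqrt hmr.le]
    field_simp
    rw [Real.sqrt_sq (Real.sqrt_nonneg _)]
  have hpt : ∀ ω, ∑ k : Fin m, ((Real.sqrt m)⁻¹ * ‖∑ u : Fin N,
        ce (-(((((u:ℤ) - Nt N : ℤ)):ℝ) * samplePts m Δ ω k)) * hvec u‖) ^ 4
      ≤ (H ^ 2 / m) * ∑ k : Fin m, ((Real.sqrt m)⁻¹ * ‖∑ u : Fin N,
        ce (-(((((u:ℤ) - Nt N : ℤ)):ℝ) * samplePts m Δ ω k)) * hvec u‖) ^ 2 := by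
    intro ω
    rw [Finset.mul_sum]
    refine Finset.sum_le_sum fun k _ => ?_
    set x := (Real.sqrt m)⁻¹ * ‖∑ u : Fin N,
        ce (-(((((u:ℤ) - Nt N : ℤ)):ℝ) * samplePts m Δ ω k)) * hvec u‖ with hx
    have hx0 : 0 ≤ x := by positivity
    have hxB : x ≤ (Real.sqrt m)⁻¹ * H :=
      mul_le_mul_of_nonneg_left (hYb ω k) (by positivity)
    have hx2 : x ^ 2 ≤ H ^ 2 / m := by
      rw [← hB]
      exact pow_le_pow_left₀ hx0 hxB 2
    calc x ^ 4 = x ^ 2 * x ^ 2 := by ring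
      _ ≤ (H ^ 2 / m) * x ^ 2 := mul_le_mul_of_nonneg_right hx2 (by positivity)
  have hmono : (∫ ω, ∑ k : Fin m, ((Real.sqrt m)⁻¹ * ‖∑ u : Fin N,
        ce (-(((((u:ℤ) - Nt N : ℤ)):ℝ) * samplePts m Δ ω k)) * hvec u‖) ^ 4 ∂μ)
      ≤ ∫ ω, (H ^ 2 / m) * ∑ k : Fin m, ((Real.sqrt m)⁻¹ * ‖∑ u : Fin N,
        ce (-(((((u:ℤ) - Nt N : ℤ)):ℝ) * samplePts m Δ ω k)) * hvec u‖) ^ 2 ∂μ := by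
    refine integral_mono (integrable_finset_sum _ fun k _ => hint4 k) ?_ hpt
    exact (integrable_finset_sum _ fun k _ => hint2 k).const_mul _
  refine hmono.trans ?_
  rw [integral_const_mul, integral_finset_sum _ fun k _ => hint2 k]
  -- reduce the squares to the core bound
  have hsq : ∀ k : Fin m, (∫ ω, ((Real.sqrt m)⁻¹ * ‖∑ u : Fin N,
        ce (-(((((u:ℤ) - Nt N : ℤ)):ℝ) * samplePts m Δ ω k)) * hvec u‖) ^ 2 ∂μ)
      = (1/m) * ∫ ω, ‖∑ u : Fin N,
        ce (-(((((u:ℤ) - Nt N : ℤ)):ℝ) * samplePts m Δ ω k)) * hvec u‖ ^ 2 ∂μ := by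
    intro k
    rw [← integral_const_mul]
    refine integral_congr_ae (Filter.Eventually.of_forall fun ω => ?_)
    beta_reduce
    rw [mul_pow, ← Real.sq_sqrt hmr.le]
    field_simp
    rw [Real.sqrt_sq (Real.sqrt_nonneg _)]; simp only [mul_comm (samplePts m Δ ω k)]
  rw [Finset.sum_congr rfl fun k _ => hsq k, ← Finset.mul_sum]
  have hcore := core_sq_bound N m hNpos hm Ωs mΩ μ hμ Δ hmeas 𝒟 h𝒟 hdist θ hθ hdev hvec
  have hchain : H ^ 2 / m * ((1/m) * ∑ k : Fin m, (∫ ω, ‖∑ u : Fin N,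
        ce (-(((((u:ℤ) - Nt N : ℤ)):ℝ) * samplePts m Δ ω k)) * hvec u‖ ^ 2 ∂μ))
      ≤ H ^ 2 / m * ((1/m) * ((1 + 2*θ) * m * S')) := by
    apply mul_le_mul_of_nonneg_left _ (by positivity)
    apply mul_le_mul_of_nonneg_left _ (by positivity)
    exact hcore
  refine hchain.trans ?_
  have hH2 : H ^ 2 ≤ γ ^ 2 * (s * norm2 v ^ 2) := by
    calc H ^ 2 ≤ (γ * norm1 v) ^ 2 := pow_le_pow_left₀ hH0 hHγ 2
      _ = γ ^ 2 * norm1 v ^ 2 := by ring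
      _ ≤ γ ^ 2 * (s * norm2 v ^ 2) :=
          mul_le_mul_of_nonneg_left hsparse (by positivity)
  have hfinal : H ^ 2 / m * ((1/m) * ((1 + 2*θ) * m * S'))
      ≤ s * β ^ 2 * γ ^ 2 * (1 + 2 * θ) * norm2 v ^ 4 / m := by
    have e1 : H ^ 2 / m * ((1/m) * ((1 + 2*θ) * m * S'))
        = (H ^ 2 * S') * ((1 + 2*θ) / m) := by
      field_simp
    rw [e1]
    have e2 : (H ^ 2 * S') ≤ (γ ^ 2 * (s * norm2 v ^ 2)) * (β ^ 2 * norm2 v ^ 2) :=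
      mul_le_mul hH2 hpars hS'0 (by positivity)
    calc (H ^ 2 * S') * ((1 + 2*θ) / m)
        ≤ ((γ ^ 2 * (s * norm2 v ^ 2)) * (β ^ 2 * norm2 v ^ 2)) * ((1 + 2*θ) / m) :=
          mul_le_mul_of_nonneg_right e2 (by positivity)
      _ = s * β ^ 2 * γ ^ 2 * (1 + 2 * θ) * norm2 v ^ 4 / m := by ring
  exact hfinal
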